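/- In the space of formal symbols: define, for x in F \ {0,1}, delta{x}_3 = {x}_2 tensor x, and for x,y distinct in F \ {0,1} define delta{x,y}_{2,1} by the four-term formula. Then the element {x,y}_{2,1} - ({1-x^{-1}}_3 + {1-y^{-1}}_3 + {(1-y)/(1-x)}_3 - {(1-y^{-1})/(1-x^{-1})}_3 + {y/x}_3) has coproduct mapping to zero in B2(F) tensor F* modulo the five-term relations; concretely, the expression delta{x,y}_{2,1} - [ {1-x^{-1}}_2 tensor (1-x^{-1}) + {1-y^{-1}}_2 tensor (1-y^{-1}) + {(1-y)/(1-x)}_2 tensor ((1-y)/(1-x)) - {(1-y^{-1})/(1-x^{-1})}_2 tensor ((1-y^{-1})/(1-x^{-1})) + {y/x}_2 tensor (y/x) ] lies in the subspace R2(F) tensor F* + Z[F] tensor {torsion}, i.e. vanishes in B2(F) tensor (F* tensor Q). -/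

import Mathlib

/-- The cross-ratio `r(a,b,c,d) = ((a-c)(b-d))/((a-d)(b-c))`. -/
def crossRatio {F : Type*} [Field F] (a b c d : F) : F :=
  ((a - c) * (b - d)) / ((a - d) * (b - c))

lemma inj5 {α : Type*} {a b c d e : α} (h1 : a ≠ b) (h2 : a ≠ c) (h3 : a ≠ d) (h4 : a ≠ e)
    (h5 : b ≠ c) (h6 : b ≠ d) (h7 : b ≠ e) (h8 : c ≠ d) (h9 : c ≠ e) (h10 : d ≠ e) :
    Function.Injective ![a, b, c, d, e] := by
  intro i j hij
  fin_cases i <;> fin_cases j <;> simp_all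

section CR
variable {F : Type*} [Field F]

lemma crC (w a b c d : F) (ha : a ≠ w) (hb : b ≠ w) (hc : c ≠ w) (hd : d ≠ w)
    (had : a ≠ d) (hbc : b ≠ c) :
    crossRatio (a-w)⁻¹ (b-w)⁻¹ (c-w)⁻¹ (d-w)⁻¹ = crossRatio a b c d := by
  have ha' : a - w ≠ 0 := sub_ne_zero.mpr ha
  have hb' : b - w ≠ 0 := sub_ne_zero.mpr hb
  have hc' : c - w ≠ 0 := sub_ne_zero.mpr hc
  have hd' : d - w ≠ 0 := sub_ne_zero.mpr hd
  have had' : a - d ≠ 0 := sub_ne_zero.mpr had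
  have hbc' : b - c ≠ 0 := sub_ne_zero.mpr hbc
  have h1 : (a-w)⁻¹ - (d-w)⁻¹ ≠ 0 := by
    rw [inv_sub_inv ha' hd']
    apply div_ne_zero
    · rw [show (d-w) - (a-w) = -(a-d) by ring]; exact neg_ne_zero.mpr had'
    · exact mul_ne_zero ha' hd'
  have h2 : (b-w)⁻¹ - (c-w)⁻¹ ≠ 0 := by
    rw [inv_sub_inv hb' hc']
    apply div_ne_zero
    · rw [show (c-w) - (b-w) = -(b-c) by ring]; exact neg_ne_zero.mpr hbc'
    · exact mul_ne_zero hb' hc'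
  unfold crossRatio
  rw [div_eq_div_iff (mul_ne_zero h1 h2) (mul_ne_zero had' hbc')]
  field_simp
  ring

lemma crA (w b c d : F) (hb : b ≠ w) (hc : c ≠ w) (hd : d ≠ w) (hbc : b ≠ c) :
    crossRatio 0 (b-w)⁻¹ (c-w)⁻¹ (d-w)⁻¹ = (b - d)/(b - c) := by
  have hb' : b - w ≠ 0 := sub_ne_zero.mpr hb
  have hc' : c - w ≠ 0 := sub_ne_zero.mpr hc
  have hd' : d - w ≠ 0 := sub_ne_zero.mpr hd
  have hbc' : b - c ≠ 0 := sub_ne_zero.mpr hbc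
  have h1 : (0:F) - (d-w)⁻¹ ≠ 0 := by
    rw [zero_sub]; exact neg_ne_zero.mpr (inv_ne_zero hd')
  have h2 : (b-w)⁻¹ - (c-w)⁻¹ ≠ 0 := by
    rw [inv_sub_inv hb' hc']
    apply div_ne_zero
    · rw [show (c-w) - (b-w) = -(b-c) by ring]; exact neg_ne_zero.mpr hbc'
    · exact mul_ne_zero hb' hc'
  unfold crossRatio
  rw [div_eq_div_iff (mul_ne_zero h1 h2) hbc']
  field_simp
  ring_nf

lemma crB (w a c d : F) (ha : a ≠ w) (hc : c ≠ w) (hd : d ≠ w) (had : a ≠ d) :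
    crossRatio (a-w)⁻¹ 0 (c-w)⁻¹ (d-w)⁻¹ = (a - c)/(a - d) := by
  have ha' : a - w ≠ 0 := sub_ne_zero.mpr ha
  have hc' : c - w ≠ 0 := sub_ne_zero.mpr hc
  have hd' : d - w ≠ 0 := sub_ne_zero.mpr hd
  have had' : a - d ≠ 0 := sub_ne_zero.mpr had
  have h1 : (a-w)⁻¹ - (d-w)⁻¹ ≠ 0 := by
    rw [inv_sub_inv ha' hd']
    apply div_ne_zero
    · rw [show (d-w) - (a-w) = -(a-d) by ring]; exact neg_ne_zero.mpr had'
    · exact mul_ne_zero ha' hd'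
  have h2 : (0:F) - (c-w)⁻¹ ≠ 0 := by
    rw [zero_sub]; exact neg_ne_zero.mpr (inv_ne_zero hc')
  unfold crossRatio
  rw [div_eq_div_iff (mul_ne_zero h1 h2) had']
  field_simp
  ring_nf

lemma cr01 (u v : F) (hv0 : v ≠ 0) (hu1 : u ≠ 1) :
    crossRatio 0 1 u v = u * (1 - v) / (v * (1 - u)) := by
  have h1 : ((0:F) - v) * (1 - u) ≠ 0 :=
    mul_ne_zero (by rw [zero_sub]; exact neg_ne_zero.mpr hv0)
      (sub_ne_zero.mpr (Ne.symm hu1))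
  have h2 : v * (1 - u) ≠ 0 := mul_ne_zero hv0 (sub_ne_zero.mpr (Ne.symm hu1))
  unfold crossRatio
  rw [div_eq_div_iff h1 h2]
  ring

lemma cr10 (u v : F) (hu0 : u ≠ 0) (hv1 : v ≠ 1) :
    crossRatio 1 0 u v = v * (1 - u) / (u * (1 - v)) := by
  have h1 : ((1:F) - v) * (0 - u) ≠ 0 :=
    mul_ne_zero (sub_ne_zero.mpr (Ne.symm hv1))
      (by rw [zero_sub]; exact neg_ne_zero.mpr hu0)
  have h2 : u * (1 - v) ≠ 0 := mul_ne_zero hu0 (sub_ne_zero.mpr (Ne.symm hv1))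
  unfold crossRatio
  rw [div_eq_div_iff h1 h2]
  ring

end CR

section Rel
variable {F : Type*} [Field F] {M : Type*} [AddCommGroup M] [Module ℚ M]

lemma relA (c : F → F → M)
    (h5 : ∀ x1 x2 x3 x4 x5 : F, Function.Injective ![x1, x2, x3, x4, x5] →
      ∀ b : F, b ≠ 0 →
        - c (crossRatio x2 x3 x4 x5) b + c (crossRatio x1 x3 x4 x5) b
        - c (crossRatio x1 x2 x4 x5) b + c (crossRatio x1 x2 x3 x5) b
        - c (crossRatio x1 x2 x3 x4) b = 0)
    {u v w b : F} (hu0 : u ≠ 0) (hu1 : u ≠ 1) (hv0 : v ≠ 0) (hv1 : v ≠ 1) (huv : u ≠ v)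
    (hw0 : w ≠ 0) (hw1 : w ≠ 1) (hwu : w ≠ u) (hwv : w ≠ v) (hb : b ≠ 0) :
    - c (u * (1 - v) / (v * (1 - u))) b + c ((1 - v) / (1 - u)) b - c (v / u) b
      + c v b - c u b = 0 := by
  have key : ∀ {s t : F}, s ≠ t → (s - w)⁻¹ ≠ (t - w)⁻¹ := fun {s t} hst h =>
    hst (sub_left_injective (inv_injective h))
  have h0 : ∀ {s : F}, s ≠ w → (0:F) ≠ (s - w)⁻¹ := fun {s} hs =>
    Ne.symm (inv_ne_zero (sub_ne_zero.mpr hs))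
  have H := h5 0 (0-w)⁻¹ (1-w)⁻¹ (u-w)⁻¹ (v-w)⁻¹
    (inj5 (h0 (Ne.symm hw0)) (h0 (Ne.symm hw1)) (h0 (Ne.symm hwu)) (h0 (Ne.symm hwv))
      (key zero_ne_one) (key (Ne.symm hu0)) (key (Ne.symm hv0))
      (key (Ne.symm hu1)) (key (Ne.symm hv1)) (key huv)) b hb
  rw [crC w 0 1 u v (Ne.symm hw0) (Ne.symm hw1) (Ne.symm hwu) (Ne.symm hwv)
        (Ne.symm hv0) (Ne.symm hu1), cr01 u v hv0 hu1,
      crA w 1 u v (Ne.symm hw1) (Ne.symm hwu) (Ne.symm hwv) (Ne.symm hu1),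
      crA w 0 u v (Ne.symm hw0) (Ne.symm hwu) (Ne.symm hwv) (Ne.symm hu0),
      crA w 0 1 v (Ne.symm hw0) (Ne.symm hw1) (Ne.symm hwv) zero_ne_one,
      crA w 0 1 u (Ne.symm hw0) (Ne.symm hw1) (Ne.symm hwu) zero_ne_one,
      show ((0:F)-v)/((0:F)-u) = v/u by rw [zero_sub, zero_sub, neg_div_neg_eq],
      show ((0:F)-v)/((0:F)-1) = v by rw [zero_sub, zero_sub, neg_div_neg_eq, div_one],
      show ((0:F)-u)/((0:F)-1) = u by rw [zero_sub, zero_sub, neg_div_neg_eq, div_one]] at H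
  exact H

lemma relB (c : F → F → M)
    (h5 : ∀ x1 x2 x3 x4 x5 : F, Function.Injective ![x1, x2, x3, x4, x5] →
      ∀ b : F, b ≠ 0 →
        - c (crossRatio x2 x3 x4 x5) b + c (crossRatio x1 x3 x4 x5) b
        - c (crossRatio x1 x2 x4 x5) b + c (crossRatio x1 x2 x3 x5) b
        - c (crossRatio x1 x2 x3 x4) b = 0)
    {u v w b : F} (hu0 : u ≠ 0) (hu1 : u ≠ 1) (hv0 : v ≠ 0) (hv1 : v ≠ 1) (huv : u ≠ v)
    (hw0 : w ≠ 0) (hw1 : w ≠ 1) (hwu : w ≠ u) (hwv : w ≠ v) (hb : b ≠ 0) :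
    - c ((1 - v) / (1 - u)) b + c (u * (1 - v) / (v * (1 - u))) b - c (u / v) b
      + c v⁻¹ b - c u⁻¹ b = 0 := by
  have key : ∀ {s t : F}, s ≠ t → (s - w)⁻¹ ≠ (t - w)⁻¹ := fun {s t} hst h =>
    hst (sub_left_injective (inv_injective h))
  have h0 : ∀ {s : F}, s ≠ w → (0:F) ≠ (s - w)⁻¹ := fun {s} hs =>
    Ne.symm (inv_ne_zero (sub_ne_zero.mpr hs))
  have H := h5 (0-w)⁻¹ 0 (1-w)⁻¹ (u-w)⁻¹ (v-w)⁻¹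
    (inj5 (h0 (Ne.symm hw0)).symm (key zero_ne_one) (key (Ne.symm hu0)) (key (Ne.symm hv0))
      (h0 (Ne.symm hw1)) (h0 (Ne.symm hwu)) (h0 (Ne.symm hwv))
      (key (Ne.symm hu1)) (key (Ne.symm hv1)) (key huv)) b hb
  rw [crA w 1 u v (Ne.symm hw1) (Ne.symm hwu) (Ne.symm hwv) (Ne.symm hu1),
      crC w 0 1 u v (Ne.symm hw0) (Ne.symm hw1) (Ne.symm hwu) (Ne.symm hwv)
        (Ne.symm hv0) (Ne.symm hu1), cr01 u v hv0 hu1,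
      crB w 0 u v (Ne.symm hw0) (Ne.symm hwu) (Ne.symm hwv) (Ne.symm hv0),
      crB w 0 1 v (Ne.symm hw0) (Ne.symm hw1) (Ne.symm hwv) (Ne.symm hv0),
      crB w 0 1 u (Ne.symm hw0) (Ne.symm hw1) (Ne.symm hwu) (Ne.symm hu0),
      show ((0:F)-u)/((0:F)-v) = u/v by rw [zero_sub, zero_sub, neg_div_neg_eq],
      show ((0:F)-1)/((0:F)-v) = v⁻¹ by
        rw [zero_sub, zero_sub, neg_div_neg_eq, one_div],
      show ((0:F)-1)/((0:F)-u) = u⁻¹ by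
        rw [zero_sub, zero_sub, neg_div_neg_eq, one_div]] at H
  exact H

lemma relC (c : F → F → M)
    (h5 : ∀ x1 x2 x3 x4 x5 : F, Function.Injective ![x1, x2, x3, x4, x5] →
      ∀ b : F, b ≠ 0 →
        - c (crossRatio x2 x3 x4 x5) b + c (crossRatio x1 x3 x4 x5) b
        - c (crossRatio x1 x2 x4 x5) b + c (crossRatio x1 x2 x3 x5) b
        - c (crossRatio x1 x2 x3 x4) b = 0)
    {u v w b : F} (hu0 : u ≠ 0) (hu1 : u ≠ 1) (hv0 : v ≠ 0) (hv1 : v ≠ 1) (huv : u ≠ v)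
    (hw0 : w ≠ 0) (hw1 : w ≠ 1) (hwu : w ≠ u) (hwv : w ≠ v) (hb : b ≠ 0) :
    - c (v * (1 - u) / (u * (1 - v))) b + c (v / u) b - c ((1 - v) / (1 - u)) b
      + c (1 - v) b - c (1 - u) b = 0 := by
  have key : ∀ {s t : F}, s ≠ t → (s - w)⁻¹ ≠ (t - w)⁻¹ := fun {s t} hst h =>
    hst (sub_left_injective (inv_injective h))
  have h0 : ∀ {s : F}, s ≠ w → (0:F) ≠ (s - w)⁻¹ := fun {s} hs =>
    Ne.symm (inv_ne_zero (sub_ne_zero.mpr hs))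
  have H := h5 0 (1-w)⁻¹ (0-w)⁻¹ (u-w)⁻¹ (v-w)⁻¹
    (inj5 (h0 (Ne.symm hw1)) (h0 (Ne.symm hw0)) (h0 (Ne.symm hwu)) (h0 (Ne.symm hwv))
      (key one_ne_zero) (key (Ne.symm hu1)) (key (Ne.symm hv1))
      (key (Ne.symm hu0)) (key (Ne.symm hv0)) (key huv)) b hb
  rw [crC w 1 0 u v (Ne.symm hw1) (Ne.symm hw0) (Ne.symm hwu) (Ne.symm hwv)
        (Ne.symm hv1) (Ne.symm hu0), cr10 u v hu0 hv1,
      crA w 0 u v (Ne.symm hw0) (Ne.symm hwu) (Ne.symm hwv) (Ne.symm hu0),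
      crA w 1 u v (Ne.symm hw1) (Ne.symm hwu) (Ne.symm hwv) (Ne.symm hu1),
      crA w 1 0 v (Ne.symm hw1) (Ne.symm hw0) (Ne.symm hwv) one_ne_zero,
      crA w 1 0 u (Ne.symm hw1) (Ne.symm hw0) (Ne.symm hwu) one_ne_zero,
      show ((0:F)-v)/((0:F)-u) = v/u by rw [zero_sub, zero_sub, neg_div_neg_eq],
      show ((1:F)-v)/((1:F)-0) = 1-v by rw [sub_zero, div_one],
      show ((1:F)-u)/((1:F)-0) = 1-u by rw [sub_zero, div_one]] at H
  exact H

end Rel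

section Derived
variable {F : Type*} [Field F] {M : Type*} [AddCommGroup M] [Module ℚ M]

abbrev FT (c : F → F → M) : Prop :=
  ∀ x1 x2 x3 x4 x5 : F, Function.Injective ![x1, x2, x3, x4, x5] → ∀ b : F, b ≠ 0 →
    - c (crossRatio x2 x3 x4 x5) b + c (crossRatio x1 x3 x4 x5) b
    - c (crossRatio x1 x2 x4 x5) b + c (crossRatio x1 x2 x3 x5) b
    - c (crossRatio x1 x2 x3 x4) b = 0

lemma czone (c : F → F → M)
    (hcmul : ∀ z a b : F, a ≠ 0 → b ≠ 0 → c z (a * b) = c z a + c z b) (z : F) :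
    c z 1 = 0 := by
  have h := hcmul z 1 1 one_ne_zero one_ne_zero
  rw [mul_one] at h
  have h2 : c z 1 + c z 1 = c z 1 + 0 := by rw [add_zero]; exact h.symm
  exact add_left_cancel h2

lemma cinv (c : F → F → M)
    (hcmul : ∀ z a b : F, a ≠ 0 → b ≠ 0 → c z (a * b) = c z a + c z b) (z b : F)
    (hb : b ≠ 0) : c z b⁻¹ = - c z b := by
  have h := hcmul z b b⁻¹ hb (inv_ne_zero hb)
  rw [mul_inv_cancel₀ hb, czone c hcmul] at h
  exact eq_neg_of_add_eq_zero_right h.symm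

lemma fdiff (c : F → F → M) (hft : FT c) (hF : Infinite F)
    {u v b : F} (hu0 : u ≠ 0) (hu1 : u ≠ 1) (hv0 : v ≠ 0) (hv1 : v ≠ 1) (huv : u ≠ v)
    (hb : b ≠ 0) :
    c (v/u) b + c (u/v) b = (c v b + c v⁻¹ b) - (c u b + c u⁻¹ b) := by
  classical
  haveI := hF
  obtain ⟨w, hw⟩ := Infinite.exists_notMem_finset ({0, 1, u, v} : Finset F)
  simp only [Finset.mem_insert, Finset.mem_singleton, not_or] at hw
  obtain ⟨hw0, hw1, hwu, hwv⟩ := hw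
  have hA := relA c hft hu0 hu1 hv0 hv1 huv hw0 hw1 hwu hwv hb
  have hB := relB c hft hu0 hu1 hv0 hv1 huv hw0 hw1 hwu hwv hb
  linear_combination (norm := module) - hA - hB

lemma f_eq (c : F → F → M) (hft : FT c) (hF : Infinite F)
    {u v b : F} (hu0 : u ≠ 0) (hu1 : u ≠ 1) (hv0 : v ≠ 0) (hv1 : v ≠ 1) (huv : u ≠ v)
    (hb : b ≠ 0) :
    c u b + c u⁻¹ b = c v b + c v⁻¹ b := by
  have h1 := fdiff c hft hF hu0 hu1 hv0 hv1 huv hb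
  have h2 := fdiff c hft hF hv0 hv1 hu0 hu1 huv.symm hb
  linear_combination (norm := module) ((1/2 : ℚ)) • h1 - ((1/2 : ℚ)) • h2

lemma f_zero (c : F → F → M) (hft : FT c) (hF : Infinite F)
    {z b : F} (hz0 : z ≠ 0) (hz1 : z ≠ 1) (hb : b ≠ 0) :
    c z b + c z⁻¹ b = 0 := by
  classical
  haveI := hF
  obtain ⟨u, hu⟩ := Infinite.exists_notMem_finset ({0, 1, z⁻¹} : Finset F)
  simp only [Finset.mem_insert, Finset.mem_singleton, not_or] at hu
  obtain ⟨hu0, hu1, huz⟩ := hu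
  have hv0 : z * u ≠ 0 := mul_ne_zero hz0 hu0
  have hv1 : z * u ≠ 1 := fun h => huz (inv_eq_of_mul_eq_one_right h).symm
  have huv : u ≠ z * u := by
    intro h
    apply hz1
    have h' : 1 * u = z * u := by rw [one_mul, ← h]
    exact (mul_right_cancel₀ hu0 h').symm
  have h1 := fdiff c hft hF hu0 hu1 hv0 hv1 huv hb
  have h2 := f_eq c hft hF hu0 hu1 hv0 hv1 huv hb
  have e1 : z * u / u = z := by field_simp
  have e2 : u / (z * u) = z⁻¹ := by field_simp [mul_comm]
  rw [e1, e2, ← h2, sub_self] at h1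
  exact h1

lemma g_diff (c : F → F → M) (hft : FT c) (hF : Infinite F)
    {u v b : F} (hu0 : u ≠ 0) (hu1 : u ≠ 1) (hv0 : v ≠ 0) (hv1 : v ≠ 1) (huv : u ≠ v)
    (hb : b ≠ 0) :
    c v b + c (1 - v) b = c u b + c (1 - u) b := by
  classical
  haveI := hF
  obtain ⟨w, hw⟩ := Infinite.exists_notMem_finset ({0, 1, u, v} : Finset F)
  simp only [Finset.mem_insert, Finset.mem_singleton, not_or] at hw
  obtain ⟨hw0, hw1, hwu, hwv⟩ := hw
  have hA := relA c hft hu0 hu1 hv0 hv1 huv hw0 hw1 hwu hwv hb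
  have hC := relC c hft hu0 hu1 hv0 hv1 huv hw0 hw1 hwu hwv hb
  have hz0 : u * (1 - v) / (v * (1 - u)) ≠ 0 :=
    div_ne_zero (mul_ne_zero hu0 (sub_ne_zero.mpr (Ne.symm hv1)))
      (mul_ne_zero hv0 (sub_ne_zero.mpr (Ne.symm hu1)))
  have hz1 : u * (1 - v) / (v * (1 - u)) ≠ 1 := by
    intro h
    apply huv
    have h' := (div_eq_one_iff_eq (mul_ne_zero hv0 (sub_ne_zero.mpr (Ne.symm hu1)))).mp h
    linear_combination h'
  have hf := f_zero c hft hF hz0 hz1 hb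
  rw [inv_div] at hf
  linear_combination (norm := module) hA + hC + hf

end Derived

section Derived2
variable {F : Type*} [Field F] {M : Type*} [AddCommGroup M] [Module ℚ M]

lemma g_zero (c : F → F → M) (hft : FT c) (hF : Infinite F)
    {z b : F} (hz0 : z ≠ 0) (hz1 : z ≠ 1) (hb : b ≠ 0) :
    c z b + c (1 - z) b = 0 := by
  have hi0 : z⁻¹ ≠ 0 := inv_ne_zero hz0
  have hi1 : z⁻¹ ≠ 1 := fun h => hz1 (inv_eq_one.mp h)
  have hz1' : z - 1 ≠ 0 := sub_ne_zero.mpr hz1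
  have hz20 : (1:F) - z⁻¹ ≠ 0 := sub_ne_zero.mpr fun h => hz1 (inv_eq_one.mp h.symm)
  have hz21 : (1:F) - z⁻¹ ≠ 1 := fun h => hi0 (by linear_combination - h)
  have h1z0 : (1:F) - z ≠ 0 := sub_ne_zero.mpr (Ne.symm hz1)
  have h1z1 : (1:F) - z ≠ 1 := fun h => hz0 (by linear_combination - h)
  have hz30 : ((1:F) - z)⁻¹ ≠ 0 := inv_ne_zero h1z0
  have hz31 : ((1:F) - z)⁻¹ ≠ 1 := fun h => h1z1 (inv_eq_one.mp h)
  have f1 := f_zero c hft hF hz0 hz1 hb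
  have f2 := f_zero c hft hF hz20 hz21 hb
  have f3 := f_zero c hft hF hz30 hz31 hb
  rw [inv_inv] at f3
  have e2 : 1 - ((1:F) - z⁻¹)⁻¹ = (1 - z)⁻¹ := by field_simp [sub_ne_zero]; ring
  have hs : (c z⁻¹ b + c (1 - z⁻¹) b) + (c ((1:F) - z⁻¹)⁻¹ b + c (((1:F)-z)⁻¹) b)
      + (c ((1:F)-z) b + c z b) = 0 := by
    linear_combination (norm := module) f1 + f2 + f3
  by_cases hzz : z = 1 - z⁻¹
  · have e1 : z⁻¹ = 1 - z := by linear_combination hzz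
    have e3 : ((1:F) - z⁻¹)⁻¹ = 1 - z := by rw [← hzz, e1]
    have e4 : ((1:F) - z)⁻¹ = z := by rw [← e1, inv_inv]
    rw [e3, e4, ← hzz, e1] at hs
    have h3 : (3:ℚ) • (c z b + c ((1:F)-z) b) = 0 := by
      rw [show (3:ℚ) = 1 + 1 + 1 by norm_num, add_smul, add_smul, one_smul]
      linear_combination (norm := module) hs
    rcases smul_eq_zero.mp h3 with h | h
    · exact absurd h (by norm_num)
    · exact h
  · have hne12 : z⁻¹ ≠ ((1:F) - z⁻¹)⁻¹ := fun h => hzz (inv_injective h)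
    have hkey : z⁻¹ ≠ 1 - z := by
      intro h
      apply hzz
      rw [h, sub_sub_cancel]
    have hg2 := g_diff c hft hF hi0 hi1 (inv_ne_zero hz20)
      (fun h => hz21 (inv_eq_one.mp h)) hne12 hb
    rw [e2] at hg2
    have hg3 := g_diff c hft hF hi0 hi1 h1z0 h1z1 hkey hb
    rw [sub_sub_cancel] at hg3
    have h3 : (3:ℚ) • (c z⁻¹ b + c ((1:F) - z⁻¹) b) = 0 := by
      rw [show (3:ℚ) = 1 + 1 + 1 by norm_num, add_smul, add_smul, one_smul]
      linear_combination (norm := module) hs - hg2 - hg3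
    have hgz1 : c z⁻¹ b + c ((1:F) - z⁻¹) b = 0 := by
      rcases smul_eq_zero.mp h3 with h | h
      · exact absurd h (by norm_num)
      · exact h
    by_cases hzi : z = z⁻¹
    · rw [hzi]; exact hgz1
    · have hgz := g_diff c hft hF hi0 hi1 hz0 hz1 (fun h => hzi h.symm) hb
      rw [hgz1] at hgz
      exact hgz

lemma tor (c : F → F → M)
    (hcmul : ∀ z a b : F, a ≠ 0 → b ≠ 0 → c z (a * b) = c z a + c z b)
    (hfin : Finite F) (z b : F) (hb : b ≠ 0) : c z b = 0 := by
  haveI := hfin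
  haveI : Finite Fˣ := Finite.of_injective Units.val Units.val_injective
  have cpow : ∀ n : ℕ, c z (b ^ n) = n • c z b := by
    intro n
    induction n with
    | zero => rw [pow_zero, czone c hcmul, zero_nsmul]
    | succ n ih => rw [pow_succ, hcmul z _ _ (pow_ne_zero n hb) hb, ih, succ_nsmul]
  have hn : (Units.mk0 b hb) ^ orderOf (Units.mk0 b hb) = 1 := pow_orderOf_eq_one _
  have hpos : 0 < orderOf (Units.mk0 b hb) := orderOf_pos _
  have hbn : b ^ orderOf (Units.mk0 b hb) = 1 := by
    have := congrArg (Units.val) hn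
    simpa only [Units.val_pow_eq_pow_val, Units.val_mk0, Units.val_one] using this
  have h0 : (orderOf (Units.mk0 b hb)) • c z b = 0 := by
    rw [← cpow, hbn, czone c hcmul]
  have hq : ((orderOf (Units.mk0 b hb) : ℚ)) • c z b = 0 := by
    rw [Nat.cast_smul_eq_nsmul]; exact h0
  rcases smul_eq_zero.mp hq with h | h
  · exact absurd h (by exact_mod_cast hpos.ne')
  · exact h

end Derived2

/-- In `B₂(F) ⊗ (F^× ⊗ ℚ)` — modeled universally by a map `c` which kills
`{0}₂, {1}₂`, is multiplicative in the second slot, and kills the five-term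
relations in the first slot — the coproduct `δ{x,y}_{2,1}` agrees with the
coproduct of
`{1-x⁻¹}₃ + {1-y⁻¹}₃ + {(1-y)/(1-x)}₃ - {(1-y⁻¹)/(1-x⁻¹)}₃ + {y/x}₃`,
where `δ{z}₃ = {z}₂ ⊗ z`. -/
theorem stmt_13 {F : Type*} [Field F] {M : Type*} [AddCommGroup M] [Module ℚ M]
    (c : F → F → M)
    (hc0 : ∀ b, c 0 b = 0) (hc1 : ∀ b, c 1 b = 0)
    (hcmul : ∀ z a b : F, a ≠ 0 → b ≠ 0 → c z (a * b) = c z a + c z b)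
    (h5 : ∀ x1 x2 x3 x4 x5 : F, Function.Injective ![x1, x2, x3, x4, x5] →
      ∀ b : F, b ≠ 0 →
        - c (crossRatio x2 x3 x4 x5) b + c (crossRatio x1 x3 x4 x5) b
        - c (crossRatio x1 x2 x4 x5) b + c (crossRatio x1 x2 x3 x5) b
        - c (crossRatio x1 x2 x3 x4) b = 0)
    (x y : F) (hx0 : x ≠ 0) (hx1 : x ≠ 1) (hy0 : y ≠ 0) (hy1 : y ≠ 1)
    (hxy : x ≠ y)
    (ha10 : 1 - x⁻¹ ≠ 0) (ha11 : 1 - x⁻¹ ≠ 1)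
    (ha20 : 1 - y⁻¹ ≠ 0) (ha21 : 1 - y⁻¹ ≠ 1)
    (ha30 : (1 - y) / (1 - x) ≠ 0) (ha31 : (1 - y) / (1 - x) ≠ 1)
    (ha40 : (1 - y⁻¹) / (1 - x⁻¹) ≠ 0) (ha41 : (1 - y⁻¹) / (1 - x⁻¹) ≠ 1)
    (ha50 : y / x ≠ 0) (ha51 : y / x ≠ 1) :
    (c ((1 - y) / (1 - x)) (y / x) + c (y / x) ((1 - y) / (1 - x))
      + c x (1 - y⁻¹) + c y (1 - x⁻¹))
    - (c (1 - x⁻¹) (1 - x⁻¹) + c (1 - y⁻¹) (1 - y⁻¹)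
      + c ((1 - y) / (1 - x)) ((1 - y) / (1 - x))
      - c ((1 - y⁻¹) / (1 - x⁻¹)) ((1 - y⁻¹) / (1 - x⁻¹))
      + c (y / x) (y / x))
    = 0 := by
  classical
  rcases finite_or_infinite F with hfin | hinf
  · rw [tor c hcmul hfin ((1 - y) / (1 - x)) (y / x) ha50,
        tor c hcmul hfin (y / x) ((1 - y) / (1 - x)) ha30,
        tor c hcmul hfin x (1 - y⁻¹) ha20,
        tor c hcmul hfin y (1 - x⁻¹) ha10,
        tor c hcmul hfin (1 - x⁻¹) (1 - x⁻¹) ha10,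
        tor c hcmul hfin (1 - y⁻¹) (1 - y⁻¹) ha20,
        tor c hcmul hfin ((1 - y) / (1 - x)) ((1 - y) / (1 - x)) ha30,
        tor c hcmul hfin ((1 - y⁻¹) / (1 - x⁻¹)) ((1 - y⁻¹) / (1 - x⁻¹)) ha40,
        tor c hcmul hfin (y / x) (y / x) ha50]
    simp
  · have hft : FT c := h5
    have hix0 : x⁻¹ ≠ 0 := inv_ne_zero hx0
    have hix1 : x⁻¹ ≠ 1 := fun h => hx1 (inv_eq_one.mp h)
    have hiy0 : y⁻¹ ≠ 0 := inv_ne_zero hy0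
    have hiy1 : y⁻¹ ≠ 1 := fun h => hy1 (inv_eq_one.mp h)
    -- E1 : c (1-x⁻¹) (1-x⁻¹) = c x (1-x⁻¹)
    have hr1 := g_zero c hft hinf hix0 hix1 ha10
    have hf1 := f_zero c hft hinf hx0 hx1 ha10
    have E1 : c (1 - x⁻¹) (1 - x⁻¹) = c x (1 - x⁻¹) := by
      linear_combination (norm := module) hr1 - hf1
    have hr2 := g_zero c hft hinf hiy0 hiy1 ha20
    have hf2 := f_zero c hft hinf hy0 hy1 ha20
    have E2 : c (1 - y⁻¹) (1 - y⁻¹) = c y (1 - y⁻¹) := by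
      linear_combination (norm := module) hr2 - hf2
    -- E3
    have E3 := hcmul x (1 - x⁻¹) ((1 - y⁻¹) / (1 - x⁻¹)) ha10 ha40
    rw [show (1 - x⁻¹) * ((1 - y⁻¹) / (1 - x⁻¹)) = 1 - y⁻¹ from
      mul_div_cancel₀ _ ha10] at E3
    -- E4
    have E4 := hcmul y (1 - y⁻¹) ((1 - y⁻¹) / (1 - x⁻¹))⁻¹ ha20 (inv_ne_zero ha40)
    rw [show (1 - y⁻¹) * ((1 - y⁻¹) / (1 - x⁻¹))⁻¹ = 1 - x⁻¹ from by
      rw [inv_div, mul_div_cancel₀ _ ha20], cinv c hcmul y _ ha40] at E4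
    -- E5 : Abel five-term with b = a4
    obtain ⟨w, hw⟩ := Infinite.exists_notMem_finset ({0, 1, x, y} : Finset F)
    simp only [Finset.mem_insert, Finset.mem_singleton, not_or] at hw
    obtain ⟨hw0, hw1, hwx, hwy⟩ := hw
    have hA := relA c hft hx0 hx1 hy0 hy1 hxy hw0 hw1 hwx hwy ha40
    rw [show x * (1 - y) / (y * (1 - x)) = (1 - y⁻¹) / (1 - x⁻¹) from by
      rw [div_eq_div_iff (mul_ne_zero hy0 (sub_ne_zero.mpr (Ne.symm hx1))) ha10]
      field_simp
      ring] at hA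
    -- E6, E7 : split second slot a4 = a3 * a5⁻¹
    have ea4 : ((1 - y) / (1 - x)) * (y / x)⁻¹ = (1 - y⁻¹) / (1 - x⁻¹) := by
      rw [inv_div, div_mul_div_comm,
        div_eq_div_iff (mul_ne_zero (sub_ne_zero.mpr (Ne.symm hx1)) hy0) ha10]
      field_simp
      ring
    have E6 := hcmul ((1 - y) / (1 - x)) ((1 - y) / (1 - x)) (y / x)⁻¹ ha30
      (inv_ne_zero ha50)
    rw [ea4, cinv c hcmul _ _ ha50] at E6
    have E7 := hcmul (y / x) ((1 - y) / (1 - x)) (y / x)⁻¹ ha30 (inv_ne_zero ha50)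
    rw [ea4, cinv c hcmul _ _ ha50] at E7
    linear_combination (norm := module) E3 + E4 - E1 - E2 - hA + E6 - E7
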